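/- arXiv:math/0012072 — 3 statements merged into one kernel-verified Lean document; each statement's English description precedes it below -/
import Mathlib

section
/- For every real ν with |ν − 1| ≤ 1 and every y > 0, the integral ∫₀^∞ e^{−y²·w} ϑ(ν/2 | w) dw converges absolutely and cosh((ν−1)y)/(y·sinh(y)) = ∫₀^∞ e^{−y²·w} ϑ(ν/2 | w) dw. -/
open MeasureTheory ProbabilityTheory Real Set

/-- The theta function `ϑ(z|t) = (πt)^{-1/2} Σ_{n ∈ ℤ} exp (-(z+n)²/t)`. -/
noncomputable def theta (z t : ℝ) : ℝ :=
  (Real.sqrt (Real.pi * t))⁻¹ * ∑' n : ℤ, Real.exp (-(z + n)^2 / t)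

/-- The Theta integral `Θ_k(h) = (1/(2√2)) ∫_0^∞ ϑ(ν/2 | w) w^{k-1}/(wh+1/2)^{k+1/2} dw`. -/
noncomputable def ThetaInt (ν h : ℝ) (k : ℕ) : ℝ :=
  (2 * Real.sqrt 2)⁻¹ *
    ∫ w in Set.Ioi (0:ℝ), theta (ν/2) w * w^(k-1) / (w*h + 1/2) ^ ((k:ℝ) + 1/2)

lemma surj_aux (a b : ℝ) (ha : 0 < a) (hb : 0 < b) :
    (fun t => a*t - b/t) '' (Ioi 0) = univ := by
  apply eq_univ_of_forall
  intro u
  have hs : 0 < Real.sqrt (u^2 + 4*a*b) := Real.sqrt_pos.mpr (by nlinarith)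
  have hs2 : Real.sqrt (u^2 + 4*a*b) ^ 2 = u^2 + 4*a*b := Real.sq_sqrt (by nlinarith)
  have hsu : |u| < Real.sqrt (u^2+4*a*b) := by
    have := Real.sqrt_lt_sqrt (sq_abs u ▸ sq_nonneg u) (by nlinarith : u^2 < u^2 + 4*a*b)
    rwa [Real.sqrt_sq_eq_abs] at this
  set s := Real.sqrt (u^2 + 4*a*b)
  have hus : 0 < u + s := by
    have : -u < s := lt_of_le_of_lt (neg_le_abs u) hsu
    linarith
  have ht : 0 < (u + s) / (2*a) := by positivity
  refine ⟨(u+s)/(2*a), ht, ?_⟩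
  have h2a : (2*a) ≠ 0 := by positivity
  have hune : u + s ≠ 0 := ne_of_gt hus
  field_simp
  ring_nf
  nlinarith [hs2]

lemma deriv_aux (a b : ℝ) {t : ℝ} (ht : t ≠ 0) :
    HasDerivAt (fun t => a*t - b/t) (a + b/t^2) t := by
  have h1 : HasDerivAt (fun t : ℝ => a*t) a t := by
    simpa using (hasDerivAt_id t).const_mul a
  have h2 : HasDerivAt (fun t : ℝ => b/t) (b * (-(t^2)⁻¹)) t := by
    simpa [div_eq_mul_inv] using (hasDerivAt_inv ht).const_mul b
  have h3 := h1.sub h2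
  exact h3.congr_deriv (by ring)

lemma inj_aux (a b : ℝ) (ha : 0 < a) (hb : 0 ≤ b) :
    InjOn (fun t => a*t - b/t) (Ioi 0) := by
  have : StrictMonoOn (fun t => a*t - b/t) (Ioi 0) := by
    intro x hx y hy hxy
    simp only [mem_Ioi] at hx hy
    have hb' : b/y ≤ b/x := div_le_div_of_nonneg_left hb hx (le_of_lt hxy)
    have : a*x < a*y := by exact (mul_lt_mul_iff_right₀ ha).mpr hxy
    simp only []
    linarith
  exact this.injOn


lemma sqrtpi_eq (a b : ℝ) (ha : 0 < a) (hb : 0 < b) :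
    ∫ t in Ioi (0:ℝ), (a + b/t^2) * Real.exp (-(a*t - b/t)^2) = Real.sqrt π := by
  have hder : ∀ t ∈ Ioi (0:ℝ), HasDerivWithinAt (fun t => a*t - b/t) (a + b/t^2) (Ioi 0) t :=
    fun t ht => (deriv_aux a b (ne_of_gt ht)).hasDerivWithinAt
  have h := integral_image_eq_integral_abs_deriv_smul measurableSet_Ioi hder
    (inj_aux a b ha hb.le) (fun u => Real.exp (-u^2))
  rw [surj_aux a b ha hb] at h
  rw [setIntegral_univ] at h
  have hg : ∫ (x : ℝ), rexp (-x ^ 2) = Real.sqrt π := by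
    simpa using integral_gaussian 1
  rw [hg] at h
  rw [h]
  apply setIntegral_congr_fun measurableSet_Ioi
  intro t ht
  have h1 : 0 < a + b/t^2 := by
    have : 0 < t := ht
    positivity
  simp only [smul_eq_mul]
  rw [abs_of_pos h1]

lemma integrable_full (a b : ℝ) (ha : 0 < a) (hb : 0 < b) :
    IntegrableOn (fun t => (a + b/t^2) * Real.exp (-(a*t - b/t)^2)) (Ioi 0) := by
  have hder : ∀ t ∈ Ioi (0:ℝ), HasDerivWithinAt (fun t => a*t - b/t) (a + b/t^2) (Ioi 0) t :=
    fun t ht => (deriv_aux a b (ne_of_gt ht)).hasDerivWithinAt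
  have h := (integrableOn_image_iff_integrableOn_abs_deriv_smul measurableSet_Ioi hder
    (inj_aux a b ha hb.le) (fun u => Real.exp (-u^2))).mp
  rw [surj_aux a b ha hb] at h
  have h2 : IntegrableOn (fun u : ℝ => Real.exp (-u^2)) univ := by
    rw [integrableOn_univ]
    simpa using integrable_exp_neg_mul_sq (show (0:ℝ) < 1 by norm_num)
  have h3 := h h2
  apply h3.congr_fun ?_ measurableSet_Ioi
  intro t ht
  have h1 : 0 < a + b/t^2 := by
    have : 0 < t := ht
    positivity
  simp only [smul_eq_mul]
  rw [abs_of_pos h1]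


lemma image_inv_aux (c : ℝ) (hc : 0 < c) : (fun s : ℝ => c / s) '' (Ioi 0) = Ioi 0 := by
  ext u
  constructor
  · rintro ⟨s, hs, rfl⟩
    exact div_pos hc hs
  · intro hu
    exact ⟨c / u, div_pos hc hu, by field_simp⟩

lemma swap_aux (a b : ℝ) (ha : 0 < a) (hb : 0 < b) :
    ∫ t in Ioi (0:ℝ), a * Real.exp (-(a*t - b/t)^2)
      = ∫ t in Ioi (0:ℝ), (b/t^2) * Real.exp (-(a*t - b/t)^2) := by
  have hder : ∀ s ∈ Ioi (0:ℝ), HasDerivWithinAt (fun s => (b/a) / s) (-((b/a) / s^2)) (Ioi 0) s := by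
    intro s hs
    have hs0 : (s:ℝ) ≠ 0 := ne_of_gt hs
    have : HasDerivAt (fun s : ℝ => (b/a) / s) ((b/a) * (-(s^2)⁻¹)) s := by
      simpa [div_eq_mul_inv] using (hasDerivAt_inv hs0).const_mul (b/a)
    have h2 : (b/a) * (-(s^2)⁻¹) = -((b/a)/s^2) := by ring
    exact (h2 ▸ this).hasDerivWithinAt
  have hinj : InjOn (fun s : ℝ => (b/a) / s) (Ioi 0) := by
    intro x hx y hy hxy
    have hx0 : (x:ℝ) ≠ 0 := ne_of_gt hx
    have hy0 : (y:ℝ) ≠ 0 := ne_of_gt hy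
    have hba : b/a ≠ 0 := by positivity
    field_simp at hxy
    exact hxy.symm
  have h := integral_image_eq_integral_abs_deriv_smul measurableSet_Ioi hder hinj
    (fun t => a * Real.exp (-(a*t - b/t)^2))
  rw [image_inv_aux (b/a) (by positivity)] at h
  rw [h]
  apply setIntegral_congr_fun measurableSet_Ioi
  intro s hs
  have hs0 : (s:ℝ) ≠ 0 := ne_of_gt hs
  have e1 : a * ((b/a)/s) = b/s := by field_simp; try ring
  have e2 : b / ((b/a)/s) = a*s := by field_simp; try ring
  have e3 : |(-((b/a)/s^2))| = b/(a*s^2) := by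
    rw [abs_neg, abs_of_pos (by positivity)]
    ring
  simp only [smul_eq_mul, e1, e2, e3]
  have : (b/s - a*s)^2 = (a*s - b/s)^2 := by ring
  rw [this]
  field_simp

lemma meas_aux (a b : ℝ) : Measurable (fun t : ℝ => Real.exp (-(a*t - b/t)^2)) := by
  apply Real.measurable_exp.comp
  apply Measurable.neg
  apply Measurable.pow_const
  have h2 : Measurable (fun t : ℝ => b / t) := by
    simp only [div_eq_mul_inv]
    exact measurable_const.mul measurable_inv
  exact (measurable_const.mul measurable_id).sub h2

lemma J_int (a b : ℝ) (ha : 0 < a) (hb : 0 ≤ b) :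
    IntegrableOn (fun t => Real.exp (-(a*t - b/t)^2)) (Ioi 0) := by
  rcases eq_or_lt_of_le hb with rfl | hb'
  · have : IntegrableOn (fun t : ℝ => Real.exp (-(a^2) * t^2)) (Ioi 0) :=
      (integrable_exp_neg_mul_sq (by positivity : (0:ℝ) < a^2)).integrableOn
    apply this.congr_fun ?_ measurableSet_Ioi
    intro t ht
    norm_num [mul_pow]
  · have hfull := integrable_full a b ha hb'
    apply Integrable.mono' (hfull.const_mul a⁻¹)
    · exact ((meas_aux a b).aestronglyMeasurable).restrict
    · filter_upwards [ae_restrict_mem measurableSet_Ioi] with t ht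
      have ht0 : (0:ℝ) < t := ht
      rw [norm_of_nonneg (le_of_lt (Real.exp_pos _))]
      have h1 : a ≤ a + b/t^2 := le_add_of_nonneg_right (by positivity)
      calc Real.exp (-(a*t - b/t)^2)
          = a⁻¹ * (a * Real.exp (-(a*t - b/t)^2)) := by field_simp
        _ ≤ a⁻¹ * ((a + b/t^2) * Real.exp (-(a*t - b/t)^2)) := by
            apply mul_le_mul_of_nonneg_left ?_ (by positivity)
            exact mul_le_mul_of_nonneg_right h1 (Real.exp_pos _).le

lemma J_eq (a b : ℝ) (ha : 0 < a) (hb : 0 ≤ b) :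
    ∫ t in Ioi (0:ℝ), Real.exp (-(a*t - b/t)^2) = Real.sqrt π / (2*a) := by
  rcases eq_or_lt_of_le hb with rfl | hb'
  · have h0 : ∀ t ∈ Ioi (0:ℝ), Real.exp (-(a*t - 0/t)^2) = Real.exp (-(a^2) * t^2) := by
      intro t ht; norm_num [mul_pow]
    rw [setIntegral_congr_fun measurableSet_Ioi h0, integral_gaussian_Ioi,
      Real.sqrt_div Real.pi_pos.le, Real.sqrt_sq ha.le]
    ring
  · have hae : Integrable (fun t => a * Real.exp (-(a*t - b/t)^2))
        (volume.restrict (Ioi 0)) := (J_int a b ha hb).const_mul a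
    have hfull := integrable_full a b ha hb'
    have hbe : Integrable (fun t => (b/t^2) * Real.exp (-(a*t - b/t)^2))
        (volume.restrict (Ioi 0)) := by
      have := hfull.sub hae
      apply this.congr
      filter_upwards with t
      simp only [Pi.sub_apply]
      ring
    have hsplit : (Real.sqrt π) = (∫ t in Ioi (0:ℝ), a * Real.exp (-(a*t - b/t)^2))
        + ∫ t in Ioi (0:ℝ), (b/t^2) * Real.exp (-(a*t - b/t)^2) := by
      rw [← integral_add hae hbe, ← sqrtpi_eq a b ha hb']
      apply integral_congr_ae
      filter_upwards with t
      ring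
    rw [← swap_aux a b ha hb', integral_const_mul] at hsplit
    have : (2*a) * ∫ t in Ioi (0:ℝ), Real.exp (-(a*t - b/t)^2) = Real.sqrt π := by
      rw [hsplit]; ring
    field_simp at this ⊢
    linarith

lemma sq_image : (fun t : ℝ => t^2) '' (Ioi 0) = Ioi 0 := by
  ext u
  constructor
  · rintro ⟨t, ht, rfl⟩
    exact pow_pos (mem_Ioi.mp ht) 2
  · intro hu
    exact ⟨Real.sqrt u, Real.sqrt_pos.mpr hu, Real.sq_sqrt (le_of_lt hu)⟩

lemma sq_deriv : ∀ t ∈ Ioi (0:ℝ), HasDerivWithinAt (fun t : ℝ => t^2) (2*t) (Ioi 0) t := by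
  intro t _
  simpa [mul_comm] using (hasDerivAt_pow 2 t).hasDerivWithinAt

lemma sq_inj : InjOn (fun t : ℝ => t^2) (Ioi 0) := by
  intro x hx y hy hxy
  have hx0 : (0:ℝ) < x := hx
  have hy0 : (0:ℝ) < y := hy
  have hxy' : x^2 = y^2 := hxy
  nlinarith [sq_nonneg (x - y), sq_nonneg (x + y)]

lemma term_congr (a b : ℝ) (ha : 0 < a) (hb : 0 ≤ b) :
    ∀ t ∈ Ioi (0:ℝ), |2*t| • ((Real.sqrt (π * t^2))⁻¹ * Real.exp (-(a^2*(t^2) + b^2/(t^2))))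
      = (2/Real.sqrt π * Real.exp (-(2*a*b))) * Real.exp (-(a*t - b/t)^2) := by
  intro t ht
  have ht0 : (0:ℝ) < t := ht
  have hsq : Real.sqrt (π * t^2) = Real.sqrt π * t := by
    rw [Real.sqrt_mul Real.pi_pos.le, Real.sqrt_sq ht0.le]
  have harg : -(a^2*(t^2) + b^2/(t^2)) = -(2*a*b) + -(a*t - b/t)^2 := by
    field_simp
    ring
  rw [smul_eq_mul, abs_of_pos (by positivity), hsq, harg, Real.exp_add]
  have hsp : Real.sqrt π ≠ 0 := by positivity
  field_simp

lemma term_lemma (a b : ℝ) (ha : 0 < a) (hb : 0 ≤ b) :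
    IntegrableOn (fun w => (Real.sqrt (π * w))⁻¹ * Real.exp (-(a^2*w + b^2/w))) (Ioi 0) ∧
    ∫ w in Ioi (0:ℝ), (Real.sqrt (π * w))⁻¹ * Real.exp (-(a^2*w + b^2/w))
      = Real.exp (-(2*a*b)) / a := by
  set g := fun w => (Real.sqrt (π * w))⁻¹ * Real.exp (-(a^2*w + b^2/w)) with hg
  have hcongr := term_congr a b ha hb
  constructor
  · rw [← sq_image]
    rw [integrableOn_image_iff_integrableOn_abs_deriv_smul measurableSet_Ioi sq_deriv sq_inj g]
    have : IntegrableOn (fun t => (2/Real.sqrt π * Real.exp (-(2*a*b))) *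
        Real.exp (-(a*t - b/t)^2)) (Ioi 0) := (J_int a b ha hb).const_mul _
    apply this.congr_fun ?_ measurableSet_Ioi
    intro t ht
    exact (hcongr t ht).symm
  · rw [← sq_image, integral_image_eq_integral_abs_deriv_smul measurableSet_Ioi sq_deriv sq_inj g]
    rw [setIntegral_congr_fun measurableSet_Ioi hcongr, integral_const_mul, J_eq a b ha hb]
    have hsp : Real.sqrt π ≠ 0 := by positivity
    field_simp

lemma sum_lemma (ν y : ℝ) (h0 : 0 ≤ ν) (h2 : ν ≤ 2) (hy : 0 < y) :
    Summable (fun n : ℤ => Real.exp (-(2*y*|ν/2 + n|)) / y) ∧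
    ∑' n : ℤ, Real.exp (-(2*y*|ν/2 + n|)) / y
      = Real.cosh ((ν-1)*y) / (y * Real.sinh y) := by
  set f := fun n : ℤ => Real.exp (-(2*y*|ν/2 + n|)) / y with hf
  have hr0 : (0:ℝ) ≤ Real.exp (-(2*y)) := (Real.exp_pos _).le
  have hr1 : Real.exp (-(2*y)) < 1 := Real.exp_lt_one_iff.mpr (by linarith)
  have hpos : ∀ n : ℕ, f n = (Real.exp (-(ν*y))/y) * (Real.exp (-(2*y)))^n := by
    intro n
    have habs : |ν/2 + (n:ℝ)| = ν/2 + n := abs_of_nonneg (by positivity)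
    rw [hf]
    push_cast
    rw [habs, ← Real.exp_nat_mul, div_mul_eq_mul_div, ← Real.exp_add]
    congr 2
    ring
  have hneg : ∀ n : ℕ, f (-(n+1)) = (Real.exp ((ν-2)*y)/y) * (Real.exp (-(2*y)))^n := by
    intro n
    have habs : |ν/2 + ((-(n+1) : ℤ) : ℝ)| = (n+1) - ν/2 := by
      push_cast
      rw [abs_of_nonpos (by push_cast; linarith)]
      ring
    rw [hf]
    simp only [Int.cast_neg, Int.cast_add, Int.cast_natCast, Int.cast_one] at habs ⊢
    rw [habs, ← Real.exp_nat_mul, div_mul_eq_mul_div, ← Real.exp_add]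
    congr 2
    ring
  have hsum1 : Summable (fun n : ℕ => f n) := by
    apply Summable.congr (((summable_geometric_of_lt_one hr0 hr1).mul_left
      (Real.exp (-(ν*y))/y))) (fun n => (hpos n).symm)
  have hsum2 : Summable (fun n : ℕ => f (-(n+1))) := by
    apply Summable.congr (((summable_geometric_of_lt_one hr0 hr1).mul_left
      (Real.exp ((ν-2)*y)/y))) (fun n => (hneg n).symm)
  refine ⟨Summable.of_nat_of_neg_add_one hsum1 hsum2, ?_⟩
  rw [tsum_of_nat_of_neg_add_one hsum1 hsum2, tsum_congr hpos, tsum_congr hneg,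
    tsum_mul_left, tsum_mul_left, tsum_geometric_of_lt_one hr0 hr1]
  -- now algebra
  rw [Real.cosh_eq, Real.sinh_eq]
  have hE : Real.exp y ≠ 0 := (Real.exp_pos y).ne'
  have hX : Real.exp (-(ν*y)) = (Real.exp ((ν-1)*y))⁻¹ * (Real.exp y)⁻¹ := by
    rw [← Real.exp_neg, ← Real.exp_neg, ← Real.exp_add]
    congr 1
    ring
  have h2' : Real.exp ((ν-2)*y) = Real.exp ((ν-1)*y) * (Real.exp y)⁻¹ := by
    rw [← Real.exp_neg, ← Real.exp_add]
    congr 1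
    ring
  have h3 : Real.exp (-(2*y)) = (Real.exp y)⁻¹ * (Real.exp y)⁻¹ := by
    rw [← Real.exp_neg, ← Real.exp_add]
    congr 1
    ring
  have h4 : Real.exp (-((ν-1)*y)) = (Real.exp ((ν-1)*y))⁻¹ := Real.exp_neg _
  have h5 : Real.exp (-y) = (Real.exp y)⁻¹ := Real.exp_neg _
  rw [hX, h2', h3, h4, h5]
  set X := Real.exp ((ν-1)*y) with hXdef
  set E := Real.exp y with hEdef
  have hXne : X ≠ 0 := (Real.exp_pos _).ne'
  have hyne : y ≠ 0 := hy.ne'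
  have hden : 1 - E⁻¹ * E⁻¹ ≠ 0 := by
    have : E⁻¹ * E⁻¹ < 1 := h3 ▸ hr1
    linarith
  have hsinh : (E - E⁻¹)/2 ≠ 0 := by
    have h1 : (1:ℝ) < E := by
      rw [hEdef, show (1:ℝ) = Real.exp 0 from (Real.exp_zero).symm]
      exact Real.exp_lt_exp.mpr hy
    have h2'' : E⁻¹ < 1 := by
      rw [inv_lt_one_iff₀]
      right; exact h1
    have : E⁻¹ < E := lt_trans h2'' h1
    intro hcon
    have : E - E⁻¹ = 0 := by linarith [hcon]
    linarith
  have h1E : (1:ℝ) < E := by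
    rw [hEdef, show (1:ℝ) = Real.exp 0 from (Real.exp_zero).symm]
    exact Real.exp_lt_exp.mpr hy
  have hEE : E*E - 1 ≠ 0 := by nlinarith
  have d1 : 1 - E⁻¹*E⁻¹ = (E*E - 1)/(E*E) := by field_simp
  have d2 : E - E⁻¹ = (E*E - 1)/E := by field_simp
  rw [d1, d2]
  field_simp
  ring

lemma g_meas (y c : ℝ) : Measurable (fun w : ℝ =>
    Real.exp (-(y^2)*w) * ((Real.sqrt (π*w))⁻¹ * Real.exp (-c^2/w))) := by
  have m1 : Measurable (fun w : ℝ => Real.exp (-(y^2)*w)) :=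
    Real.measurable_exp.comp (measurable_const.mul measurable_id)
  have m2 : Measurable (fun w : ℝ => (Real.sqrt (π*w))⁻¹) :=
    ((Real.continuous_sqrt.comp (continuous_const.mul continuous_id)).measurable).inv
  have m0 : Measurable (fun w : ℝ => -c^2 / w) := by
    simp only [div_eq_mul_inv]
    exact measurable_const.mul measurable_inv
  have m3 : Measurable (fun w : ℝ => Real.exp (-c^2/w)) := Real.measurable_exp.comp m0
  exact m1.mul (m2.mul m3)

lemma g_nonneg (y c : ℝ) (w : ℝ) :
    0 ≤ Real.exp (-(y^2)*w) * ((Real.sqrt (π*w))⁻¹ * Real.exp (-c^2/w)) := by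
  have := Real.sqrt_nonneg (π*w)
  positivity


/-- For `|ν - 1| ≤ 1` and `y > 0`, the integral `∫_0^∞ e^{-y² w} ϑ(ν/2 | w) dw` converges
absolutely and equals `cosh((ν-1)y)/(y sinh y)`. -/
theorem hyperbolic_quotient_as_theta_laplace_transform
    (ν : ℝ) (hν : |ν - 1| ≤ 1) (y : ℝ) (hy : 0 < y) :
    IntegrableOn (fun w => Real.exp (-(y^2) * w) * theta (ν/2) w) (Set.Ioi 0) volume ∧
    Real.cosh ((ν - 1) * y) / (y * Real.sinh y)
      = ∫ w in Set.Ioi (0:ℝ), Real.exp (-(y^2) * w) * theta (ν/2) w := by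
  obtain ⟨h0, h2⟩ : 0 ≤ ν ∧ ν ≤ 2 := by
    rw [abs_le] at hν
    constructor <;> linarith [hν.1, hν.2]
  set g : ℤ → ℝ → ℝ := fun n w =>
    Real.exp (-(y^2)*w) * ((Real.sqrt (π*w))⁻¹ * Real.exp (-(ν/2 + n)^2/w)) with hgdef
  -- pointwise representation
  have hFeq : (fun w => Real.exp (-(y^2) * w) * theta (ν/2) w)
      = fun w => ∑' n : ℤ, g n w := by
    funext w
    rw [hgdef]
    simp only [theta]
    rw [tsum_mul_left, tsum_mul_left]
  -- g in term_lemma form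
  have hgt : ∀ n : ℤ, g n = fun w =>
      (Real.sqrt (π*w))⁻¹ * Real.exp (-(y^2*w + |ν/2 + n|^2/w)) := by
    intro n
    funext w
    rw [hgdef]
    simp only [sq_abs]
    rw [mul_left_comm, ← Real.exp_add]
    congr 2
    ring
  have habs : ∀ n : ℤ, (0:ℝ) ≤ |ν/2 + n| := fun n => abs_nonneg _
  have hInt : ∀ n : ℤ, IntegrableOn (g n) (Ioi 0) := by
    intro n
    rw [hgt n]
    simpa using (term_lemma y |ν/2 + n| hy (habs n)).1
  have hval : ∀ n : ℤ, ∫ w in Ioi (0:ℝ), g n w = Real.exp (-(2*y*|ν/2 + n|)) / y := by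
    intro n
    rw [hgt n]
    simpa using (term_lemma y |ν/2 + n| hy (habs n)).2
  obtain ⟨hsumm, hsumval⟩ := sum_lemma ν y h0 h2 hy
  have hcnn : ∀ n : ℤ, 0 ≤ Real.exp (-(2*y*|ν/2 + n|)) / y :=
    fun n => div_nonneg (Real.exp_pos _).le hy.le
  have hgnn : ∀ n : ℤ, ∀ w : ℝ, 0 ≤ g n w := fun n w => g_nonneg y (ν/2+n) w
  have hgm : ∀ n : ℤ, Measurable (g n) := fun n => g_meas y (ν/2+n)
  -- lintegral of each term
  have hlint : ∀ n : ℤ, ∫⁻ w in Ioi (0:ℝ), ENNReal.ofReal (g n w)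
      = ENNReal.ofReal (Real.exp (-(2*y*|ν/2 + n|)) / y) := by
    intro n
    rw [← hval n, ← ofReal_integral_eq_lintegral_ofReal (hInt n)
      (Filter.Eventually.of_forall (fun w => hgnn n w))]
  have hlintsum : ∑' n : ℤ, ∫⁻ w in Ioi (0:ℝ), ENNReal.ofReal (g n w)
      = ENNReal.ofReal (∑' n : ℤ, Real.exp (-(2*y*|ν/2 + n|)) / y) := by
    rw [ENNReal.ofReal_tsum_of_nonneg hcnn hsumm]
    exact tsum_congr hlint
  have hne : (∑' n : ℤ, ∫⁻ w in Ioi (0:ℝ), ENNReal.ofReal (g n w)) ≠ ⊤ := by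
    rw [hlintsum]; exact ENNReal.ofReal_ne_top
  -- nnnorm = ofReal for g n
  have hnn_eq : ∀ n : ℤ, ∀ w : ℝ, (‖g n w‖₊ : ENNReal) = ENNReal.ofReal (g n w) :=
    fun n w => Real.enorm_eq_ofReal (hgnn n w)
  -- measurability of the tsum
  have htsum_meas : Measurable (fun w => ∑' n : ℤ, g n w) := by
    have hpt : ∀ w, ∑' n : ℤ, g n w = (((∑' n : ℤ, Real.toNNReal (g n w)) : NNReal) : ℝ) := by
      intro w
      rw [NNReal.coe_tsum]
      exact tsum_congr fun n => (Real.coe_toNNReal _ (hgnn n w)).symm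
    have hm : Measurable (fun w => (((∑' n : ℤ, Real.toNNReal (g n w)) : NNReal) : ℝ)) :=
      (Measurable.nnreal_tsum (fun n => (hgm n).real_toNNReal)).coe_nnreal_real
    have heq : (fun w => ∑' n : ℤ, g n w)
        = fun w => (((∑' n : ℤ, Real.toNNReal (g n w)) : NNReal) : ℝ) := funext hpt
    rw [heq]
    exact hm
  -- pointwise nnnorm bound for the tsum
  have hbound : ∀ w, (‖∑' n : ℤ, g n w‖₊ : ENNReal) ≤ ∑' n : ℤ, ENNReal.ofReal (g n w) := by
    intro w
    by_cases h : Summable (fun n : ℤ => g n w)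
    · have hnn : 0 ≤ ∑' n : ℤ, g n w := tsum_nonneg (fun n => hgnn n w)
      rw [← enorm_eq_nnnorm, Real.enorm_eq_ofReal hnn,
        ENNReal.ofReal_tsum_of_nonneg (fun n => hgnn n w) h]
    · rw [tsum_eq_zero_of_not_summable h]
      simp
  have hfin : (∫⁻ w in Ioi (0:ℝ), ‖∑' n : ℤ, g n w‖₊) < ⊤ := by
    calc (∫⁻ w in Ioi (0:ℝ), ‖∑' n : ℤ, g n w‖₊)
        ≤ ∫⁻ w in Ioi (0:ℝ), ∑' n : ℤ, ENNReal.ofReal (g n w) :=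
          lintegral_mono (fun w => hbound w)
      _ = ∑' n : ℤ, ∫⁻ w in Ioi (0:ℝ), ENNReal.ofReal (g n w) :=
          lintegral_tsum (fun n => ((hgm n).ennreal_ofReal).aemeasurable)
      _ < ⊤ := lt_top_iff_ne_top.mpr hne
  have hIntF : IntegrableOn (fun w => ∑' n : ℤ, g n w) (Ioi 0) volume :=
    ⟨htsum_meas.aestronglyMeasurable.restrict, hfin⟩
  have hkey : ∑' n : ℤ, ∫⁻ w in Ioi (0:ℝ), (‖g n w‖₊ : ENNReal) ≠ ⊤ := by
    have : ∀ n : ℤ, ∫⁻ w in Ioi (0:ℝ), (‖g n w‖₊ : ENNReal)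
        = ∫⁻ w in Ioi (0:ℝ), ENNReal.ofReal (g n w) :=
      fun n => lintegral_congr (fun w => hnn_eq n w)
    rw [tsum_congr this]
    exact hne
  have hswap : ∫ w in Ioi (0:ℝ), ∑' n : ℤ, g n w = ∑' n : ℤ, ∫ w in Ioi (0:ℝ), g n w :=
    integral_tsum (fun n => (hgm n).aestronglyMeasurable.restrict) hkey
  constructor
  · rw [hFeq]
    exact hIntF
  · rw [hFeq, hswap, tsum_congr hval, hsumval]
end

section
/- For every real x and every t > 0: 1 + 2·Σ_{n=1}^∞ (−1)^n e^{−(πn)²·t} cos(2πnx) = (πt)^{−1/2} · Σ_{n∈ℤ} exp(−(x − 1/2 + n)²/t), both series converging absolutely. -/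
open MeasureTheory Real

lemma gauss_summable_nat (c u : ℝ) (hu : 0 < u) :
    Summable fun n : ℕ => Real.exp (-(c + n)^2 / u) := by
  refine Summable.of_nonneg_of_le (fun n => (Real.exp_pos _).le)
    (fun n => ?_) (Real.summable_exp_neg_nat.mul_left (Real.exp (u/4 - c)))
  rw [← Real.exp_add]
  apply Real.exp_le_exp.2
  rw [div_le_iff₀ hu] at *
  nlinarith [sq_nonneg (c + (n:ℝ) - u/2), hu]

lemma gauss_summable_int (c u : ℝ) (hu : 0 < u) :
    Summable fun n : ℤ => Real.exp (-(c + n)^2 / u) := by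
  refine Summable.of_nat_of_neg_add_one ?_ ?_
  · exact_mod_cast gauss_summable_nat c u hu
  · refine (gauss_summable_nat (1 - c) u hu).congr fun n => ?_
    congr 1
    push_cast
    ring_nf

/-- The Jacobi transformation formula for the theta function, at real arguments: for `x ∈ ℝ`
and `t > 0`, `1 + 2 Σ_{n≥1} (-1)^n e^{-(πn)² t} cos(2πnx) = (πt)^{-1/2} Σ_{n∈ℤ} e^{-(x-1/2+n)²/t}`,
both series converging absolutely. -/
theorem jacobi_transformation_formula (x t : ℝ) (ht : 0 < t) :
    Summable (fun n : ℕ =>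
      |(-1)^(n+1) * Real.exp (-(Real.pi*((n:ℝ)+1))^2 * t) * Real.cos (2*Real.pi*((n:ℝ)+1)*x)|) ∧
    Summable (fun n : ℤ => |Real.exp (-(x - 1/2 + (n:ℝ))^2 / t)|) ∧
    1 + 2 * ∑' n : ℕ,
        (-1)^(n+1) * Real.exp (-(Real.pi*((n:ℝ)+1))^2 * t) * Real.cos (2*Real.pi*((n:ℝ)+1)*x)
      = (Real.sqrt (Real.pi * t))⁻¹ * ∑' n : ℤ, Real.exp (-(x - 1/2 + (n:ℝ))^2 / t) := by
  have hπt : 0 < π * t := mul_pos pi_pos ht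
  have hT : 0 < π^2 * t := by positivity
  set b : ℝ := x - 1/2 with hb
  -- Summability claims
  have hmaj : Summable (fun n : ℕ => Real.exp (-(π*((n:ℝ)+1))^2 * t)) := by
    refine (gauss_summable_nat 1 (1/(π^2*t)) (by positivity)).congr fun n => ?_
    congr 1
    field_simp
    ring
  have hsum1 : Summable (fun n : ℕ =>
      |(-1)^(n+1) * Real.exp (-(π*((n:ℝ)+1))^2 * t) * Real.cos (2*π*((n:ℝ)+1)*x)|) := by
    refine Summable.of_nonneg_of_le (fun n => abs_nonneg _) (fun n => ?_) hmaj
    rw [abs_mul, abs_mul, abs_pow, abs_neg, abs_one, one_pow, one_mul,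
      abs_of_pos (Real.exp_pos _)]
    exact mul_le_of_le_one_right (Real.exp_pos _).le (Real.abs_cos_le_one _)
  have hsum2 : Summable (fun n : ℤ => |Real.exp (-(x - 1/2 + (n:ℝ))^2 / t)|) := by
    refine (gauss_summable_int (x - 1/2) t ht).congr fun n => ?_
    rw [abs_of_pos (Real.exp_pos _)]
  refine ⟨hsum1, hsum2, ?_⟩
  -- the summand on the ℤ side, as a real function
  set F : ℤ → ℝ := fun n => Real.exp (-(π^2*t)*(n:ℝ)^2) * Real.cos (2*π*b*(n:ℝ)) with hF
  -- Poisson summation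
  have key := Complex.tsum_exp_neg_quadratic (a := ((π*t : ℝ) : ℂ))
    (by simpa using hπt) (Complex.I * (b : ℂ))
  have hL : ∀ n : ℤ, Complex.exp (-(π:ℂ) * ((π*t : ℝ) : ℂ) * (n:ℂ)^2 + 2*(π:ℂ)*(Complex.I*(b:ℂ))*(n:ℂ))
      = ((Real.exp (-(π^2*t)*(n:ℝ)^2) : ℝ) : ℂ) * Complex.exp (((2*π*b*(n:ℝ) : ℝ) : ℂ) * Complex.I) := by
    intro n
    rw [Complex.ofReal_exp, ← Complex.exp_add]
    congr 1
    push_cast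
    ring
  have hR : ∀ n : ℤ, Complex.exp (-(π:ℂ) / ((π*t : ℝ) : ℂ) * ((n:ℂ) + Complex.I * (Complex.I*(b:ℂ)))^2)
      = ((Real.exp (-((n:ℝ) - b)^2 / t) : ℝ) : ℂ) := by
    intro n
    rw [Complex.ofReal_exp]
    congr 1
    have h1 : (n:ℂ) + Complex.I * (Complex.I*(b:ℂ)) = (((n:ℝ) - b : ℝ) : ℂ) := by
      rw [← mul_assoc, Complex.I_mul_I]
      push_cast
      ring
    have h2 : -(π:ℂ) / ((π*t : ℝ) : ℂ) = ((-(1/t) : ℝ) : ℂ) := by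
      have hπ : (π:ℂ) ≠ 0 := Complex.ofReal_ne_zero.2 pi_ne_zero
      have ht' : (t:ℂ) ≠ 0 := Complex.ofReal_ne_zero.2 ht.ne'
      push_cast
      field_simp
    rw [h1, h2, ← Complex.ofReal_pow, ← Complex.ofReal_mul]
    congr 1
    field_simp
  rw [tsum_congr hL, tsum_congr hR, ← Complex.ofReal_tsum] at key
  -- summability of the left complex series
  have hS1 : Summable (fun n : ℤ =>
      ((Real.exp (-(π^2*t)*(n:ℝ)^2) : ℝ) : ℂ) * Complex.exp (((2*π*b*(n:ℝ) : ℝ) : ℂ) * Complex.I)) := by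
    apply Summable.of_norm
    refine (gauss_summable_int 0 (1/(π^2*t)) (by positivity)).congr fun n => ?_
    rw [norm_mul, Complex.norm_real, Complex.norm_exp_ofReal_mul_I, mul_one,
      Real.norm_eq_abs, abs_of_pos (Real.exp_pos _)]
    congr 1
    field_simp
    ring
  -- take real parts
  have hre := congrArg Complex.re key
  rw [Complex.re_tsum hS1] at hre
  have hterm : ∀ n : ℤ,
      (((Real.exp (-(π^2*t)*(n:ℝ)^2) : ℝ) : ℂ) * Complex.exp (((2*π*b*(n:ℝ) : ℝ) : ℂ) * Complex.I)).re
        = F n := by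
    intro n
    rw [Complex.re_ofReal_mul, Complex.exp_ofReal_mul_I_re]
  rw [tsum_congr hterm] at hre
  have hpow : ((π*t : ℝ) : ℂ) ^ (1/2 : ℂ) = ((Real.sqrt (π*t) : ℝ) : ℂ) := by
    rw [show (1/2 : ℂ) = ((1/2 : ℝ) : ℂ) by norm_num, ← Complex.ofReal_cpow hπt.le]
    norm_cast
    exact (Real.sqrt_eq_rpow _).symm
  rw [hpow, show (1:ℂ)/((Real.sqrt (π*t) : ℝ) : ℂ) = (((Real.sqrt (π*t))⁻¹ : ℝ) : ℂ) by
    push_cast; ring, ← Complex.ofReal_mul, Complex.ofReal_re] at hre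
  -- hre : ∑' n : ℤ, F n = (√(π*t))⁻¹ * ∑' n : ℤ, exp (-(n-b)^2/t)
  have hneg : ∑' n : ℤ, Real.exp (-((n:ℝ) - b)^2 / t) = ∑' n : ℤ, Real.exp (-(b + (n:ℝ))^2 / t) := by
    rw [← (Equiv.neg ℤ).tsum_eq (fun n : ℤ => Real.exp (-((n:ℝ) - b)^2 / t))]
    refine tsum_congr fun n => ?_
    simp only [Equiv.neg_apply]
    congr 1
    push_cast
    ring
  rw [hneg] at hre
  -- split the ℤ-sum of F
  have hFZ : Summable F := by
    refine Summable.of_norm_bounded (g := fun n : ℤ => Real.exp (-(π^2*t)*(n:ℝ)^2))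
      ((gauss_summable_int 0 (1/(π^2*t)) (by positivity)).congr (fun n => ?_)) (fun n => ?_)
    · congr 1
      field_simp
      ring
    · rw [hF, Real.norm_eq_abs, abs_mul, abs_of_pos (Real.exp_pos _)]
      exact mul_le_of_le_one_right (Real.exp_pos _).le (Real.abs_cos_le_one _)
  have hFnat : Summable (fun n : ℕ => F (n:ℤ)) :=
    hFZ.comp_injective (fun a b h => by exact_mod_cast h)
  have hFneg : Summable (fun n : ℕ => F (-((n:ℤ)+1))) :=
    hFZ.comp_injective (fun a b h => by omega)
  have hsplit := tsum_of_nat_of_neg_add_one hFnat hFneg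
  have heven : ∀ n : ℕ, F (-((n:ℤ)+1)) = F ((n:ℤ)+1) := by
    intro n
    rw [hF]
    push_cast
    rw [show (-((n:ℝ)+1))^2 = ((n:ℝ)+1)^2 by ring, show 2*π*b*(-((n:ℝ)+1)) = -(2*π*b*((n:ℝ)+1)) by ring,
      Real.cos_neg]
  rw [tsum_congr heven] at hsplit
  have hzero := Summable.tsum_eq_zero_add hFnat
  have hF0 : F ((0:ℕ):ℤ) = 1 := by simp [hF]
  have hcast : ∀ n : ℕ, F (((n+1 : ℕ)):ℤ) = F ((n:ℤ)+1) := fun n => by push_cast; ring_nf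
  -- final term identity
  have hterm2 : ∀ n : ℕ, F ((n:ℤ)+1)
      = (-1)^(n+1) * Real.exp (-(π*((n:ℝ)+1))^2 * t) * Real.cos (2*π*((n:ℝ)+1)*x) := by
    intro n
    rw [hF]
    push_cast
    have hc : Real.cos (2*π*b*((n:ℝ)+1)) = (-1)^(n+1) * Real.cos (2*π*((n:ℝ)+1)*x) := by
      rw [show 2*π*b*((n:ℝ)+1) = -((((n+1:ℕ)):ℝ)*π - 2*π*((n:ℝ)+1)*x) by rw [hb]; push_cast; ring,
        Real.cos_neg, Real.cos_nat_mul_pi_sub]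
    rw [hc, show -(π^2*t)*((n:ℝ)+1)^2 = -(π*((n:ℝ)+1))^2*t by ring]
    ring
  calc 1 + 2 * ∑' n : ℕ, (-1)^(n+1) * Real.exp (-(π*((n:ℝ)+1))^2 * t) * Real.cos (2*π*((n:ℝ)+1)*x)
      = 1 + 2 * ∑' n : ℕ, F ((n:ℤ)+1) := by
        rw [tsum_congr fun n => (hterm2 n).symm]
    _ = ∑' n : ℤ, F n := by
        rw [hsplit, hzero, hF0, tsum_congr hcast]
        ring
    _ = (Real.sqrt (π*t))⁻¹ * ∑' n : ℤ, Real.exp (-(b + (n:ℝ))^2 / t) := hre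
end

section
/- For every ν ∈ ℝ, h > 0 and integer n ≥ 1, with I_n(z) := ∫₀^∞ e^{−zt} · t^{n−1} · (1+t)^{−(n+1/2)} dt for z ≥ 0 (so that I_n(z) = Γ(n)·Ψ(n, 1/2; z) with Ψ the confluent hypergeometric function of the second kind), the series Σ_{m=1}^∞ cos(πmν) · I_n((πm)²/(2h)) converges absolutely and Θ_n(h) = (1/(2h^n)) · I_n(0) + (1/h^n) · Σ_{m=1}^∞ cos(πmν) · I_n((πm)²/(2h)). -/
set_option maxHeartbeats 1000000


open MeasureTheory Real Set

lemma summable_exp_nat {w : ℝ} (hw : 0 < w) :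
    Summable (fun n : ℕ => Real.exp (-(Real.pi*n)^2*w)) := by
  refine Summable.of_nonneg_of_le (fun n => (Real.exp_pos _).le) (fun n => ?_)
    (summable_geometric_of_lt_one (Real.exp_pos (-(Real.pi^2*w))).le
      (Real.exp_lt_one_iff.2 (neg_neg_iff_pos.2 (by positivity))))
  rw [← Real.exp_nat_mul]
  apply Real.exp_le_exp.2
  have h1 : (n:ℝ) ≤ (n:ℝ)^2 := by
    rcases Nat.eq_zero_or_pos n with h | h
    · simp [h]
    · have : (1:ℝ) ≤ (n:ℝ) := Nat.one_le_cast.2 h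
      nlinarith
  nlinarith [mul_le_mul_of_nonneg_left h1 (by positivity : (0:ℝ) ≤ Real.pi^2*w)]

lemma summable_exp_int {w : ℝ} (hw : 0 < w) :
    Summable (fun n : ℤ => Real.exp (-(Real.pi*n)^2*w)) := by
  refine Summable.of_nat_of_neg ?_ ?_ <;>
    simpa [neg_sq, mul_neg] using summable_exp_nat hw

lemma theta_poisson (z : ℝ) {w : ℝ} (hw : 0 < w) :
    theta z w = ∑' n : ℤ, Real.exp (-(Real.pi*n)^2*w) * Real.cos (2*Real.pi*n*z) := by
  have hπw : 0 < Real.pi * w := by positivity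
  have ha : (0:ℝ) < ((Real.pi * w : ℝ) : ℂ).re := by simpa using hπw
  have key := Complex.tsum_exp_neg_quadratic (a := ((Real.pi * w : ℝ) : ℂ)) ha (-(Complex.I)*z)
  -- rewrite both sides of key
  have hL : ∀ n : ℤ, Complex.exp (-(Real.pi:ℂ) * ((Real.pi * w : ℝ) : ℂ) * (n:ℂ) ^ 2
        + 2 * (Real.pi:ℂ) * (-(Complex.I)*z) * (n:ℂ))
      = Complex.exp (((-(Real.pi*n)^2*w : ℝ) : ℂ) + ((-(2*Real.pi*n*z) : ℝ):ℂ) * Complex.I) := by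
    intro n
    congr 1
    push_cast
    ring
  have hR : ∀ n : ℤ, Complex.exp (-(Real.pi:ℂ) / ((Real.pi * w : ℝ) : ℂ)
        * ((n:ℂ) + Complex.I * (-(Complex.I)*z)) ^ 2)
      = Complex.exp (((-(z + n)^2 / w : ℝ) : ℂ)) := by
    intro n
    have hπ : (Real.pi : ℂ) ≠ 0 := Complex.ofReal_ne_zero.2 Real.pi_ne_zero
    have hwne : (w : ℂ) ≠ 0 := Complex.ofReal_ne_zero.2 hw.ne'
    congr 1
    push_cast
    have hz : Complex.I * (-Complex.I * (z:ℂ)) = (z:ℂ) := by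
      rw [neg_mul, mul_neg, ← mul_assoc, Complex.I_mul_I]; ring
    rw [hz]
    field_simp
    ring
  simp_rw [hL, hR] at key
  set c := Real.sqrt (Real.pi * w) with hc
  have hcpos : 0 < c := Real.sqrt_pos.2 hπw
  have hcC : ((Real.pi * w : ℝ) : ℂ) ^ (1/2 : ℂ) = (c : ℂ) := by
    rw [hc, Real.sqrt_eq_rpow]
    rw [Complex.ofReal_cpow hπw.le (1/2)]
    norm_num
  rw [hcC] at key
  have hsumT : Summable (fun n : ℤ => Complex.exp (((-(Real.pi*n)^2*w : ℝ) : ℂ)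
      + ((-(2*Real.pi*n*z) : ℝ):ℂ) * Complex.I)) := by
    apply Summable.of_norm
    have : ∀ n : ℤ, ‖Complex.exp (((-(Real.pi*n)^2*w : ℝ) : ℂ)
        + ((-(2*Real.pi*n*z) : ℝ):ℂ) * Complex.I)‖ = Real.exp (-(Real.pi*n)^2*w) := by
      intro n
      rw [Complex.norm_exp]
      congr 1
      rw [Complex.add_re, Complex.ofReal_re, Complex.re_ofReal_mul, Complex.I_re,
        mul_zero, add_zero]
    simpa only [this] using summable_exp_int hw
  have hos : (∑' n : ℤ, Complex.exp (((-(z + n)^2 / w : ℝ) : ℂ)))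
      = ((∑' n : ℤ, Real.exp (-(z + n)^2 / w) : ℝ) : ℂ) := by
    rw [Complex.ofReal_tsum]
    exact tsum_congr fun n => by rw [Complex.ofReal_exp]
  rw [hos] at key
  have key2 : ((∑' n : ℤ, Real.exp (-(z + n)^2 / w) : ℝ) : ℂ)
      = (c : ℂ) * ∑' n : ℤ, Complex.exp (((-(Real.pi*n)^2*w : ℝ) : ℂ)
        + ((-(2*Real.pi*n*z) : ℝ):ℂ) * Complex.I) := by
    rw [key]
    have : (c:ℂ) ≠ 0 := Complex.ofReal_ne_zero.2 hcpos.ne'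
    field_simp
  have hre : (∑' n : ℤ, Real.exp (-(z + n)^2 / w))
      = c * ∑' n : ℤ, Real.exp (-(Real.pi*n)^2*w) * Real.cos (2*Real.pi*n*z) := by
    have := congrArg Complex.re key2
    rw [Complex.ofReal_re, Complex.re_ofReal_mul, Complex.re_tsum hsumT] at this
    rw [this]
    congr 1
    refine tsum_congr fun n => ?_
    rw [Complex.exp_add, ← Complex.ofReal_exp, Complex.re_ofReal_mul,
      Complex.exp_ofReal_mul_I_re, Real.cos_neg]
  rw [theta, hre, ← hc, ← mul_assoc, inv_mul_cancel₀ hcpos.ne', one_mul]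

lemma summable_exp_nat' {w : ℝ} (hw : 0 < w) :
    Summable (fun m : ℕ => Real.exp (-(Real.pi*((m:ℝ)+1))^2*w)) := by
  have h := (summable_nat_add_iff (f := fun n : ℕ => Real.exp (-(Real.pi*(n:ℝ))^2*w)) 1).2
    (summable_exp_nat hw)
  refine h.congr fun m => ?_
  norm_cast

lemma summable_G (z : ℝ) {w : ℝ} (hw : 0 < w) :
    Summable (fun m : ℕ => Real.exp (-(Real.pi*((m:ℝ)+1))^2*w) * Real.cos (2*Real.pi*((m:ℝ)+1)*z)) := by
  refine Summable.of_norm_bounded (summable_exp_nat' hw) (fun m => ?_)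
  rw [norm_mul, Real.norm_eq_abs, Real.norm_eq_abs, abs_of_pos (Real.exp_pos _)]
  calc Real.exp (-(Real.pi*((m:ℝ)+1))^2*w) * |Real.cos (2*Real.pi*((m:ℝ)+1)*z)|
      ≤ Real.exp (-(Real.pi*((m:ℝ)+1))^2*w) * 1 := by
        exact mul_le_mul_of_nonneg_left (Real.abs_cos_le_one _) (Real.exp_pos _).le
    _ = _ := mul_one _

lemma theta_expand (z : ℝ) {w : ℝ} (hw : 0 < w) :
    theta z w = 1 + 2 * ∑' m : ℕ,
      Real.exp (-(Real.pi*((m:ℝ)+1))^2*w) * Real.cos (2*Real.pi*((m:ℝ)+1)*z) := by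
  set g : ℤ → ℝ := fun n => Real.exp (-(Real.pi*n)^2*w) * Real.cos (2*Real.pi*n*z) with hg
  have hsum : Summable g := by
    refine Summable.of_norm_bounded (summable_exp_int hw) (fun n => ?_)
    rw [hg, norm_mul, Real.norm_eq_abs, Real.norm_eq_abs, abs_of_pos (Real.exp_pos _)]
    calc Real.exp (-(Real.pi*(n:ℝ))^2*w) * |Real.cos (2*Real.pi*(n:ℝ)*z)|
        ≤ Real.exp (-(Real.pi*(n:ℝ))^2*w) * 1 :=
          mul_le_mul_of_nonneg_left (Real.abs_cos_le_one _) (Real.exp_pos _).le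
      _ = _ := mul_one _
  have hnat : Summable (fun n : ℕ => g n) :=
    hsum.comp_injective (Nat.cast_injective : Function.Injective ((↑) : ℕ → ℤ))
  have hneg : Summable (fun n : ℕ => g (-(n+1))) :=
    hsum.comp_injective (fun a b hab => by
      simp only [neg_inj, add_left_inj, Nat.cast_inj] at hab; exact hab)
  have hsplit := tsum_of_nat_of_neg_add_one hnat hneg
  have heven : ∀ n : ℕ, g (-((n:ℤ)+1)) = g ((n:ℤ)+1) := by
    intro n
    rw [hg]
    push_cast
    rw [show Real.pi * -((n:ℝ)+1) = -(Real.pi*((n:ℝ)+1)) by ring,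
      show 2*Real.pi* -((n:ℝ)+1)*z = -(2*Real.pi*((n:ℝ)+1)*z) by ring, neg_sq, Real.cos_neg]
  have hzero := Summable.tsum_eq_zero_add hnat
  have hg1 : ∀ n : ℕ, g ((n:ℤ)+1) = Real.exp (-(Real.pi*((n:ℝ)+1))^2*w)
      * Real.cos (2*Real.pi*((n:ℝ)+1)*z) := by
    intro n; rw [hg]; push_cast; ring_nf
  have h0 : g 0 = 1 := by rw [hg]; norm_num
  have hth : theta z w = ∑' n : ℤ, g n := theta_poisson z hw
  rw [hth, hsplit, hzero]
  have e1 : ∀ n : ℕ, g ((n:ℤ) + 1) = g ((n+1 : ℕ) : ℤ) := fun n => by push_cast; ring_nf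
  calc g 0 + ∑' (n : ℕ), g ↑(n + 1) + ∑' (n : ℕ), g (-(↑n + 1))
      = 1 + (∑' (n : ℕ), g ((n:ℤ)+1) + ∑' (n : ℕ), g ((n:ℤ)+1)) := by
        rw [h0]
        rw [show (fun n : ℕ => g (-((n:ℤ)+1))) = fun n : ℕ => g ((n:ℤ)+1) from funext heven]
        rw [show (fun n : ℕ => g (((n+1:ℕ)):ℤ)) = fun n : ℕ => g ((n:ℤ)+1) from
          funext fun n => (e1 n).symm]
        ring
    _ = 1 + 2 * ∑' m : ℕ, Real.exp (-(Real.pi*((m:ℝ)+1))^2*w)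
        * Real.cos (2*Real.pi*((m:ℝ)+1)*z) := by
        rw [show (fun n : ℕ => g ((n:ℤ)+1)) = fun n : ℕ => Real.exp (-(Real.pi*((n:ℝ)+1))^2*w)
          * Real.cos (2*Real.pi*((n:ℝ)+1)*z) from funext hg1]
        ring

lemma meas_core (z : ℝ) (n : ℕ) :
    Measurable (fun t : ℝ => Real.exp (-z*t) * t^(n-1) / (1+t)^((n:ℝ)+1/2)) := by
  fun_prop

lemma B_integrable : IntegrableOn (fun t : ℝ => (1+t)^(-(3/2) : ℝ)) (Ioi 0) := by
  have hmeas : Measurable (fun t : ℝ => (1+t)^(-(3/2) : ℝ)) := by fun_prop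
  have h1 : IntegrableOn (fun t : ℝ => (1+t)^(-(3/2) : ℝ)) (Ioc 0 1) := by
    refine Integrable.mono' (g := fun _ => (1:ℝ)) (integrableOn_const measure_Ioc_lt_top.ne)
      hmeas.aestronglyMeasurable (ae_restrict_of_forall_mem measurableSet_Ioc fun t ht => ?_)
    rw [Real.norm_eq_abs, abs_of_nonneg (Real.rpow_nonneg (by linarith [ht.1]) _)]
    calc (1+t)^(-(3/2) : ℝ) ≤ (1+t)^(0:ℝ) :=
          Real.rpow_le_rpow_of_exponent_le (by linarith [ht.1]) (by norm_num)
      _ = 1 := Real.rpow_zero _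
  have h2 : IntegrableOn (fun t : ℝ => (1+t)^(-(3/2) : ℝ)) (Ioi 1) := by
    refine Integrable.mono' (integrableOn_Ioi_rpow_of_lt (by norm_num : (-(3/2):ℝ) < -1)
      one_pos) hmeas.aestronglyMeasurable (ae_restrict_of_forall_mem measurableSet_Ioi fun t ht => ?_)
    rw [Real.norm_eq_abs, abs_of_nonneg (Real.rpow_nonneg (by linarith [mem_Ioi.1 ht]) _)]
    exact Real.rpow_le_rpow_of_nonpos (by linarith [mem_Ioi.1 ht]) (by linarith [mem_Ioi.1 ht])
      (by norm_num)
  have := h1.union h2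
  rwa [Ioc_union_Ioi_eq_Ioi (by norm_num : (0:ℝ) ≤ 1)] at this

lemma core_le_B {n : ℕ} (hn : 1 ≤ n) {z t : ℝ} (hz : 0 ≤ z) (ht : 0 < t) :
    Real.exp (-z*t) * t^(n-1) / (1+t)^((n:ℝ)+1/2) ≤ (1+t)^(-(3/2) : ℝ) := by
  have h1t : (0:ℝ) < 1 + t := by linarith
  have hexp : Real.exp (-z*t) ≤ 1 := Real.exp_le_one_iff.2 (by nlinarith)
  have hpow : t^(n-1) ≤ (1+t)^(((n-1:ℕ)):ℝ) := by
    rw [Real.rpow_natCast]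
    exact pow_le_pow_left₀ ht.le (by linarith) _
  have hbound : t^(n-1) / (1+t)^((n:ℝ)+1/2) ≤ (1+t)^(-(3/2):ℝ) := by
    rw [div_le_iff₀ (Real.rpow_pos_of_pos h1t _), ← Real.rpow_add h1t]
    refine hpow.trans (Real.rpow_le_rpow_of_exponent_le (by linarith) ?_)
    rw [Nat.cast_sub hn]
    push_cast
    linarith
  calc Real.exp (-z*t) * t^(n-1) / (1+t)^((n:ℝ)+1/2)
      ≤ 1 * t^(n-1) / (1+t)^((n:ℝ)+1/2) := by
        gcongr
    _ = t^(n-1) / (1+t)^((n:ℝ)+1/2) := by rw [one_mul]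
    _ ≤ _ := hbound

lemma core_nonneg (n : ℕ) (z : ℝ) {t : ℝ} (ht : 0 < t) :
    0 ≤ Real.exp (-z*t) * t^(n-1) / (1+t)^((n:ℝ)+1/2) := by positivity

lemma core_integrable {n : ℕ} (hn : 1 ≤ n) {z : ℝ} (hz : 0 ≤ z) :
    IntegrableOn (fun t : ℝ => Real.exp (-z*t) * t^(n-1) / (1+t)^((n:ℝ)+1/2)) (Ioi 0) := by
  refine Integrable.mono' B_integrable (meas_core z n).aestronglyMeasurable
    (ae_restrict_of_forall_mem measurableSet_Ioi fun t ht => ?_)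
  rw [Real.norm_eq_abs, abs_of_nonneg (core_nonneg n z (mem_Ioi.1 ht))]
  exact core_le_B hn hz (mem_Ioi.1 ht)

lemma exp_integral_Ioi {z : ℝ} (hz : 0 < z) :
    ∫ t in Ioi (0:ℝ), Real.exp (-z*t) = z⁻¹ := by
  have := integral_comp_mul_left_Ioi (fun x => Real.exp (-x)) 0 hz
  simp only [mul_zero, smul_eq_mul, integral_exp_neg_Ioi, Real.exp_zero, mul_one] at this
  rw [show (fun t => Real.exp (-z*t)) = fun t => Real.exp (-(z*t)) from funext fun t => by ring_nf]
  rw [this]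
  norm_num

lemma core_integral_le {n : ℕ} (hn : 1 ≤ n) {z : ℝ} (hz : 0 < z) :
    ∫ t in Ioi (0:ℝ), Real.exp (-z*t) * t^(n-1) / (1+t)^((n:ℝ)+1/2) ≤ z⁻¹ := by
  rw [← exp_integral_Ioi hz]
  refine setIntegral_mono_on (core_integrable hn hz.le) (exp_neg_integrableOn_Ioi 0 hz)
    measurableSet_Ioi fun t ht => ?_
  have h1t : (0:ℝ) < 1 + t := by linarith [mem_Ioi.1 ht]
  have hpow : t^(n-1) ≤ (1+t)^((n:ℝ)+1/2) := by
    calc t^(n-1) ≤ (1+t)^(((n-1:ℕ)):ℝ) := by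
          rw [Real.rpow_natCast]
          exact pow_le_pow_left₀ (mem_Ioi.1 ht).le (by linarith) _
      _ ≤ (1+t)^((n:ℝ)+1/2) := by
          refine Real.rpow_le_rpow_of_exponent_le (by linarith [mem_Ioi.1 ht]) ?_
          rw [Nat.cast_sub hn]; push_cast; linarith
  rw [div_le_iff₀ (Real.rpow_pos_of_pos h1t _)]
  calc Real.exp (-z*t) * t^(n-1) ≤ Real.exp (-z*t) * (1+t)^((n:ℝ)+1/2) := by
        gcongr
    _ = _ := rfl

/-- The first series for the Theta integrals, in terms of the integrals
`I_n(z) = ∫_0^∞ e^{-zt} t^{n-1} (1+t)^{-(n+1/2)} dt = Γ(n) Ψ(n, 1/2; z)`: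
`Θ_n(h) = (1/(2h^n)) I_n(0) + (1/h^n) Σ_{m≥1} cos(πmν) I_n((πm)²/(2h))`, the series
converging absolutely. -/
theorem theta_integral_first_series (ν h : ℝ) (hh : 0 < h) (n : ℕ) (hn : 1 ≤ n) :
    letI I : ℝ → ℝ := fun z =>
      ∫ t in Set.Ioi (0:ℝ), Real.exp (-z*t) * t^(n-1) / (1+t) ^ ((n:ℝ) + 1/2)
    Summable (fun m : ℕ =>
      |Real.cos (Real.pi*((m:ℝ)+1)*ν) * I ((Real.pi*((m:ℝ)+1))^2/(2*h))|) ∧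
    ThetaInt ν h n
      = (1/(2*h^n)) * I 0
        + (1/h^n) * ∑' m : ℕ, Real.cos (Real.pi*((m:ℝ)+1)*ν) * I ((Real.pi*((m:ℝ)+1))^2/(2*h)) := by
  set I : ℝ → ℝ := fun z =>
      ∫ t in Set.Ioi (0:ℝ), Real.exp (-z*t) * t^(n-1) / (1+t) ^ ((n:ℝ) + 1/2) with hI
  set zm : ℕ → ℝ := fun m => (Real.pi*((m:ℝ)+1))^2/(2*h) with hzm
  have hzmpos : ∀ m : ℕ, 0 < zm m := by
    intro m
    have : (0:ℝ) < Real.pi*((m:ℝ)+1) := by positivity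
    positivity
  have hInonneg : ∀ z : ℝ, 0 ≤ I z := by
    intro z
    exact setIntegral_nonneg measurableSet_Ioi fun t ht => core_nonneg n z (mem_Ioi.1 ht)
  have hIle : ∀ m : ℕ, I (zm m) ≤ (zm m)⁻¹ := fun m => core_integral_le hn (hzmpos m)
  have hbsum : Summable (fun m : ℕ => (zm m)⁻¹) := by
    have b0 : Summable (fun m : ℕ => (((m:ℝ))^2)⁻¹) :=
      (Real.summable_nat_pow_inv).2 one_lt_two
    have b1 : Summable (fun m : ℕ => ((((m:ℕ)+1:ℕ):ℝ)^2)⁻¹) :=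
      (summable_nat_add_iff 1).2 b0
    have b2 : Summable (fun m : ℕ => (((m:ℝ)+1)^2)⁻¹) := by
      refine b1.congr fun m => ?_
      norm_cast
    refine (b2.mul_left (2*h/Real.pi^2)).congr fun m => ?_
    rw [hzm]
    have hπ : Real.pi ≠ 0 := Real.pi_ne_zero
    have hm : ((m:ℝ)+1) ≠ 0 := by positivity
    field_simp
  have hsum : Summable (fun m : ℕ =>
      |Real.cos (Real.pi*((m:ℝ)+1)*ν) * I ((Real.pi*((m:ℝ)+1))^2/(2*h))|) := by
    refine Summable.of_nonneg_of_le (fun m => abs_nonneg _) (fun m => ?_) hbsum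
    rw [abs_mul, abs_of_nonneg (hInonneg _)]
    calc |Real.cos (Real.pi*((m:ℝ)+1)*ν)| * I (zm m) ≤ 1 * I (zm m) := by
          gcongr
          · exact hInonneg _
          · exact Real.abs_cos_le_one _
      _ = I (zm m) := one_mul _
      _ ≤ (zm m)⁻¹ := hIle m
  refine ⟨hsum, ?_⟩
  have h2h : (0:ℝ) < 2*h := by linarith
  set g : ℝ → ℝ := fun t => t^(n-1) / (1+t)^((n:ℝ)+1/2) with hg
  -- step A : change of variables
  have stepA : ThetaInt ν h n
      = (1/(2*h^n)) * ∫ t in Ioi (0:ℝ), theta (ν/2) (t/(2*h)) * g t := by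
    rw [ThetaInt]
    have hb : (0:ℝ) < (2*h)⁻¹ := inv_pos.2 h2h
    have cov := integral_comp_mul_left_Ioi
      (fun w => theta (ν/2) w * w^(n-1) / (w*h + 1/2) ^ ((n:ℝ) + 1/2)) 0 hb
    simp only [mul_zero, smul_eq_mul, inv_inv] at cov
    have hpt : ∀ t ∈ Ioi (0:ℝ),
        theta (ν/2) ((2*h)⁻¹*t) * ((2*h)⁻¹*t)^(n-1) / ((2*h)⁻¹*t*h + 1/2) ^ ((n:ℝ) + 1/2)
        = ((2:ℝ)^((n:ℝ)+1/2) * ((2*h)^(n-1))⁻¹) * (theta (ν/2) (t/(2*h)) * g t) := by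
      intro t ht
      have ht' := mem_Ioi.1 ht
      have h1t : (0:ℝ) < 1 + t := by linarith
      have e0 : (2*h)⁻¹ * t = t/(2*h) := by ring
      have e1 : (2*h)⁻¹*t*h + 1/2 = (1+t)/2 := by field_simp; ring
      rw [e1, e0, Real.div_rpow h1t.le (by norm_num : (0:ℝ) ≤ 2), div_pow, hg]
      have hne1 : ((1+t):ℝ)^((n:ℝ)+1/2) ≠ 0 := (Real.rpow_pos_of_pos h1t _).ne'
      have hne2 : ((2:ℝ))^((n:ℝ)+1/2) ≠ 0 :=
        (Real.rpow_pos_of_pos (by norm_num : (0:ℝ) < 2) _).ne'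
      have hne3 : ((2*h):ℝ)^(n-1) ≠ 0 := pow_ne_zero _ (by linarith)
      field_simp
    rw [setIntegral_congr_fun measurableSet_Ioi hpt, MeasureTheory.integral_const_mul] at cov
    have hBA : (∫ w in Ioi (0:ℝ), theta (ν/2) w * w^(n-1) / (w*h + 1/2) ^ ((n:ℝ) + 1/2))
        = (2*h)⁻¹ * (((2:ℝ)^((n:ℝ)+1/2) * ((2*h)^(n-1))⁻¹)
          * ∫ t in Ioi (0:ℝ), theta (ν/2) (t/(2*h)) * g t) := by
      rw [cov, ← mul_assoc, inv_mul_cancel₀ (by linarith : (2*h) ≠ 0), one_mul]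
    have hconst : (2*Real.sqrt 2)⁻¹ * ((2*h)⁻¹ * ((2:ℝ)^((n:ℝ)+1/2) * ((2*h)^(n-1))⁻¹))
        = 1/(2*h^n) := by
      have e1 : (2:ℝ)^((n:ℝ)+1/2) = 2^n * Real.sqrt 2 := by
        rw [Real.rpow_add (by norm_num : (0:ℝ) < 2), Real.rpow_natCast, ← Real.sqrt_eq_rpow]
      have e2 : ((2*h):ℝ)^(n-1) = (2*h)^n / (2*h) := by
        rw [eq_div_iff (by linarith : (2*h) ≠ 0), ← pow_succ]
        congr 1
        omega
      have hs2 : Real.sqrt 2 ≠ 0 := by positivity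
      have hhn : (h:ℝ)^n ≠ 0 := pow_ne_zero _ hh.ne'
      rw [e1, e2, mul_pow]
      field_simp
    rw [hBA]
    calc (2*Real.sqrt 2)⁻¹ * ((2*h)⁻¹ * (((2:ℝ)^((n:ℝ)+1/2) * ((2*h)^(n-1))⁻¹)
          * ∫ t in Ioi (0:ℝ), theta (ν/2) (t/(2*h)) * g t))
        = ((2*Real.sqrt 2)⁻¹ * ((2*h)⁻¹ * ((2:ℝ)^((n:ℝ)+1/2) * ((2*h)^(n-1))⁻¹)))
          * ∫ t in Ioi (0:ℝ), theta (ν/2) (t/(2*h)) * g t := by ring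
      _ = (1/(2*h^n)) * ∫ t in Ioi (0:ℝ), theta (ν/2) (t/(2*h)) * g t := by rw [hconst]
  -- the summand functions
  set F0 : ℕ → ℝ → ℝ := fun k t => match k with
    | 0 => g t
    | (m+1) => 2 * Real.cos (Real.pi*((m:ℝ)+1)*ν) * (Real.exp (-(zm m)*t) * g t) with hF0
  have hF0succ : ∀ (m : ℕ) (t : ℝ), F0 (m+1) t
      = (Real.exp (-(Real.pi*((m:ℝ)+1))^2*(t/(2*h))) * Real.cos (2*Real.pi*((m:ℝ)+1)*(ν/2)))
        * (2 * g t) := by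
    intro m t
    show 2 * Real.cos (Real.pi*((m:ℝ)+1)*ν) * (Real.exp (-(zm m)*t) * g t) = _
    rw [show -(zm m)*t = -(Real.pi*((m:ℝ)+1))^2*(t/(2*h)) by
        rw [hzm]; field_simp,
      show 2*Real.pi*((m:ℝ)+1)*(ν/2) = Real.pi*((m:ℝ)+1)*ν by ring]
    ring
  -- pointwise series expansion
  have hpw : ∀ t ∈ Ioi (0:ℝ), theta (ν/2) (t/(2*h)) * g t = ∑' k : ℕ, F0 k t := by
    intro t ht
    have hw : 0 < t/(2*h) := div_pos (mem_Ioi.1 ht) h2h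
    have hsummable1 : Summable (fun m : ℕ => F0 (m+1) t) := by
      rw [show (fun m : ℕ => F0 (m+1) t) = fun m : ℕ =>
        (Real.exp (-(Real.pi*((m:ℝ)+1))^2*(t/(2*h))) * Real.cos (2*Real.pi*((m:ℝ)+1)*(ν/2)))
          * (2 * g t) from funext fun m => hF0succ m t]
      exact (summable_G (ν/2) hw).mul_right _
    have hsummable0 : Summable (fun k : ℕ => F0 k t) := (summable_nat_add_iff 1).1 hsummable1
    rw [Summable.tsum_eq_zero_add hsummable0,
      show (fun m : ℕ => F0 (m+1) t) = fun m : ℕ =>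
        (Real.exp (-(Real.pi*((m:ℝ)+1))^2*(t/(2*h))) * Real.cos (2*Real.pi*((m:ℝ)+1)*(ν/2)))
          * (2 * g t) from funext fun m => hF0succ m t,
      tsum_mul_right, theta_expand (ν/2) hw]
    show _ = g t + _
    ring
  -- integrability of each summand
  have hcore' : ∀ z : ℝ, 0 ≤ z →
      IntegrableOn (fun t : ℝ => Real.exp (-z*t) * g t) (Ioi 0) := by
    intro z hz
    have := core_integrable hn hz (n := n)
    refine this.congr_fun (fun t _ => ?_) measurableSet_Ioi
    simp only [hg, mul_div_assoc]
  have hgint : IntegrableOn g (Ioi 0) := by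
    have := hcore' 0 le_rfl
    refine this.congr_fun (fun t _ => ?_) measurableSet_Ioi
    simp
  have hint : ∀ k : ℕ, Integrable (F0 k) (volume.restrict (Ioi 0)) := by
    intro k
    match k with
    | 0 => exact hgint
    | (m+1) => exact ((hcore' (zm m) (hzmpos m).le).const_mul _)
  have hnorm1 : ∀ m : ℕ, (∫ t in Ioi (0:ℝ), ‖F0 (m+1) t‖) ≤ 2 * (zm m)⁻¹ := by
    intro m
    have hb : IntegrableOn (fun t : ℝ => 2 * Real.exp (-(zm m)*t)) (Ioi 0) :=
      (exp_neg_integrableOn_Ioi 0 (hzmpos m)).const_mul 2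
    have : (∫ t in Ioi (0:ℝ), ‖F0 (m+1) t‖) ≤ ∫ t in Ioi (0:ℝ), 2 * Real.exp (-(zm m)*t) := by
      refine setIntegral_mono_on (hint (m+1)).norm hb measurableSet_Ioi fun t ht => ?_
      have ht' := mem_Ioi.1 ht
      have hgle : g t ≤ 1 := by
        rw [hg]
        rw [div_le_one (Real.rpow_pos_of_pos (by linarith) _)]
        calc t^(n-1) ≤ (1+t)^(((n-1:ℕ)):ℝ) := by
              rw [Real.rpow_natCast]
              exact pow_le_pow_left₀ ht'.le (by linarith) _
          _ ≤ (1+t)^((n:ℝ)+1/2) := by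
              refine Real.rpow_le_rpow_of_exponent_le (by linarith) ?_
              rw [Nat.cast_sub hn]; push_cast; linarith
      have hgnn : 0 ≤ g t := by rw [hg]; positivity
      show ‖2 * Real.cos (Real.pi*((m:ℝ)+1)*ν) * (Real.exp (-(zm m)*t) * g t)‖ ≤ _
      rw [norm_mul, norm_mul, norm_mul]
      simp only [Real.norm_eq_abs]
      rw [abs_of_nonneg (Real.exp_pos _).le, abs_of_nonneg hgnn]
      calc |(2:ℝ)| * |Real.cos (Real.pi*((m:ℝ)+1)*ν)| * (Real.exp (-(zm m)*t) * g t)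
          ≤ 2 * 1 * (Real.exp (-(zm m)*t) * 1) := by
            gcongr <;> first
              | exact hgnn
              | exact hgle
              | exact Real.abs_cos_le_one _
              | positivity
              | simp
          _ = 2 * Real.exp (-(zm m)*t) := by ring
    refine this.trans ?_
    rw [MeasureTheory.integral_const_mul, exp_integral_Ioi (hzmpos m)]
  have hnormnn : ∀ k : ℕ, 0 ≤ ∫ t in Ioi (0:ℝ), ‖F0 k t‖ :=
    fun k => integral_nonneg fun t => norm_nonneg _
  have hsummableN : Summable (fun k : ℕ => ∫ t in Ioi (0:ℝ), ‖F0 k t‖) := by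
    refine (summable_nat_add_iff 1).1 (Summable.of_nonneg_of_le (fun m => hnormnn (m+1))
      hnorm1 (hbsum.mul_left 2))
  have hswap := MeasureTheory.integral_tsum_of_summable_integral_norm hint hsummableN
  have hSummInt : Summable (fun k : ℕ => ∫ t in Ioi (0:ℝ), F0 k t) :=
    (MeasureTheory.hasSum_integral_of_summable_integral_norm hint hsummableN).summable
  have hI0 : (∫ t in Ioi (0:ℝ), F0 0 t) = I 0 := by
    rw [hI]
    refine setIntegral_congr_fun measurableSet_Ioi fun t _ => ?_
    show g t = _
    rw [hg]
    norm_num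
  have hIm : ∀ m : ℕ, (∫ t in Ioi (0:ℝ), F0 (m+1) t)
      = 2 * (Real.cos (Real.pi*((m:ℝ)+1)*ν) * I (zm m)) := by
    intro m
    have : (∫ t in Ioi (0:ℝ), F0 (m+1) t)
        = 2 * Real.cos (Real.pi*((m:ℝ)+1)*ν) * ∫ t in Ioi (0:ℝ), Real.exp (-(zm m)*t) * g t := by
      rw [← MeasureTheory.integral_const_mul]
    rw [this, hI]
    rw [show (∫ t in Ioi (0:ℝ), Real.exp (-(zm m)*t) * g t)
        = ∫ t in Ioi (0:ℝ), Real.exp (-(zm m)*t) * t^(n-1) / (1+t)^((n:ℝ)+1/2) from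
      setIntegral_congr_fun measurableSet_Ioi fun t _ => by rw [hg, mul_div_assoc]]
    ring
  -- put everything together
  have hA : (∫ t in Ioi (0:ℝ), theta (ν/2) (t/(2*h)) * g t)
      = I 0 + 2 * ∑' m : ℕ, Real.cos (Real.pi*((m:ℝ)+1)*ν) * I (zm m) := by
    rw [setIntegral_congr_fun measurableSet_Ioi hpw, ← hswap,
      Summable.tsum_eq_zero_add hSummInt, hI0]
    congr 1
    rw [show (fun m : ℕ => ∫ t in Ioi (0:ℝ), F0 (m+1) t)
        = fun m : ℕ => 2 * (Real.cos (Real.pi*((m:ℝ)+1)*ν) * I (zm m)) from funext hIm]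
    rw [tsum_mul_left]
  rw [stepA, hA]
  have hhn : (h:ℝ)^n ≠ 0 := pow_ne_zero _ hh.ne'
  show (1/(2*h^n)) * (I 0 + 2 * ∑' m : ℕ, Real.cos (Real.pi*((m:ℝ)+1)*ν) * I (zm m))
    = (1/(2*h^n)) * I 0 + (1/h^n) * ∑' m : ℕ, Real.cos (Real.pi*((m:ℝ)+1)*ν) * I (zm m)
  rw [mul_add, ← mul_assoc]
  congr 2
  ring
end
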